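/- Let (A, B) be a suitable pair of sequences of integers all greater than 1, and let S = ⟨C(A,B)⟩ be the numerical semigroup generated by the compound sequence C(A,B). Then O(G(S)) ≥ E(G(S)), and the following are equivalent: (1) O(G(S)) = E(G(S)); (2) every term of the compound sequence C(A,B) is odd; (3) every term of A and every term of B is odd. -/

import Mathlib

/-- The monoid `⟨t_0, …, t_{n-1}⟩` of all nonnegative integer linear combinations of
the first `n` terms of the sequence `t`. -/
def genBy (t : ℕ → ℕ) (n : ℕ) : Set ℕ :=
  {s | ∃ x : ℕ → ℕ, s = ∑ i ∈ Finset.range n, x i * t i}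

/-- `d_i = gcd(t_0, …, t_i)`. -/
def seqD (t : ℕ → ℕ) (i : ℕ) : ℕ := Finset.gcd (Finset.range (i + 1)) t

/-- `c_j = d_{j-1} / d_j` (for `j ≥ 1`). -/
def seqC (t : ℕ → ℕ) (j : ℕ) : ℕ := seqD t (j - 1) / seqD t j

/-- The sequence `(t_0, …, t_k)` of positive integers is telescopic if
`c_j · t_j ∈ ⟨t_0, …, t_{j-1}⟩` for every `j = 1, …, k`. -/
def IsTelescopic (t : ℕ → ℕ) (k : ℕ) : Prop :=
  (∀ i ≤ k, 0 < t i) ∧ ∀ j, 1 ≤ j → j ≤ k → seqC t j * t j ∈ genBy t j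

/-- `O(T)`: the number of odd elements of `T`. -/
noncomputable def countOdd (T : Set ℕ) : ℕ := {x ∈ T | Odd x}.ncard

/-- `E(T)`: the number of even elements of `T`. -/
noncomputable def countEven (T : Set ℕ) : ℕ := {x ∈ T | Even x}.ncard

/-- `(A, B)` (with terms indexed `1, …, p`) is a suitable pair of sequences of positive
integers: `gcd (A i) (B j) = 1` for all `j ≤ i`. -/
def IsSuitablePair (A B : ℕ → ℕ) (p : ℕ) : Prop :=
  (∀ i, 1 ≤ i → i ≤ p → 0 < A i ∧ 0 < B i) ∧
    ∀ i j, 1 ≤ j → j ≤ i → i ≤ p → Nat.gcd (A i) (B j) = 1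

/-- The compound sequence `C(A,B) = (n_0, …, n_p)`: `n_i = b_1 ⋯ b_i · a_{i+1} ⋯ a_p`
(equivalently `n_0 = a_1 ⋯ a_p` and `n_i = n_{i-1} b_i / a_i`). -/
def compoundSeq (A B : ℕ → ℕ) (p : ℕ) (i : ℕ) : ℕ :=
  (∏ j ∈ Finset.Icc 1 i, B j) * ∏ j ∈ Finset.Icc (i + 1) p, A j

open Finset

def DD (G : Finset ℕ) : ℤ := ∑ x ∈ G, (-1:ℤ)^(x+1)

lemma DD_eq (G : Finset ℕ) :
    DD G = ((G.filter (fun x => Odd x)).card : ℤ) - ((G.filter (fun x => Even x)).card : ℤ) := by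
  have h := Finset.sum_filter_add_sum_filter_not G (fun x => Odd x) (fun x => (-1:ℤ)^(x+1))
  have h1 : ∑ x ∈ G.filter (fun x => Odd x), (-1:ℤ)^(x+1) = (G.filter (fun x => Odd x)).card := by
    rw [Finset.sum_congr rfl (fun x hx => ?_), Finset.sum_const, nsmul_eq_mul, mul_one]
    have hx' : Odd x := (Finset.mem_filter.mp hx).2
    exact (hx'.add_one).neg_one_pow
  have h2 : G.filter (fun x => ¬ Odd x) = G.filter (fun x => Even x) := by
    apply Finset.filter_congr; intro x _; simp [Nat.not_odd_iff_even]
  have h3 : ∑ x ∈ G.filter (fun x => Even x), (-1:ℤ)^(x+1) = -((G.filter (fun x => Even x)).card : ℤ) := by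
    rw [Finset.sum_congr rfl (fun x hx => ?_), Finset.sum_const, nsmul_eq_mul, mul_neg, mul_one]
    have hx' : Even x := (Finset.mem_filter.mp hx).2
    rw [(Even.add_one hx').neg_one_pow]
  rw [DD, ← h, h1, h2, h3]; ring

lemma sum_neg_one_pow (n : ℕ) :
    ∑ k ∈ range n, (-1:ℤ)^k = if Even n then 0 else 1 := by
  induction n with
  | zero => simp
  | succ n ih =>
    rw [Finset.sum_range_succ, ih]
    rcases Nat.even_or_odd n with h | h
    · simp [h, Nat.even_add_one, h.neg_one_pow]
    · simp [Nat.not_even_iff_odd.2 h, Nat.even_add_one, Nat.not_even_iff_odd.2 h, h.neg_one_pow]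

lemma sum_neg_one_pow_mul (t : ℕ) :
    ∑ k ∈ range (2*t), (-1:ℤ)^(k+1) * k = t := by
  induction t with
  | zero => simp
  | succ t ih =>
    have : 2 * (t+1) = (2*t) + 1 + 1 := by ring
    rw [this, Finset.sum_range_succ, Finset.sum_range_succ, ih]
    have he : Even (2*t) := even_two_mul t
    have h1 : (-1:ℤ)^(2*t+1) = -1 := (Odd.neg_one_pow (by exact he.add_one))
    have h2 : (-1:ℤ)^(2*t+1+1) = 1 := by
      rw [pow_succ, h1]; ring
    rw [h1, h2]; push_cast; ring
open Finset

def glueSet (S : Set ℕ) (a b : ℕ) : Set ℕ := {x | ∃ s ∈ S, ∃ k : ℕ, x = a * s + k * b}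

def glueG (G : Finset ℕ) (a b : ℕ) : Finset ℕ :=
  (range a).biUnion (fun k =>
    (G.image fun m => k*b + a*m) ∪ (range (k*b / a)).image fun s => k*b % a + a*s)

section
variable {S : Set ℕ} {G : Finset ℕ} {a b c : ℕ}

lemma hbc_mod (ha : 1 < a) (hc : b * c % a = 1) : ∀ k, k < a → k * b % a * c % a = k := by
  intro k hk
  have h1 : (k * b % a) * c ≡ k * b * c [MOD a] := Nat.ModEq.mul_right c (Nat.mod_modEq _ _)
  have h2 : k * b * c ≡ k * 1 [MOD a] := by
    have : b * c ≡ 1 [MOD a] := by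
      unfold Nat.ModEq; rw [hc, Nat.mod_eq_of_lt ha]
    calc k * b * c = k * (b * c) := by ring
      _ ≡ k * 1 [MOD a] := Nat.ModEq.mul_left k this
  have h3 : (k * b % a) * c ≡ k [MOD a] := (h1.trans h2).trans (by rw [mul_one])
  have h4 : (k * b % a) * c % a = k % a := h3
  rwa [Nat.mod_eq_of_lt hk] at h4

lemma res_inj (ha : 1 < a) (hc : b * c % a = 1) {k k' : ℕ} (hk : k < a) (hk' : k' < a)
    (h : k * b % a = k' * b % a) : k = k' := by
  have := hbc_mod ha hc k hk
  rw [h, hbc_mod ha hc k' hk'] at this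
  exact this.symm

lemma glue_uniq (ha : 1 < a) (hc : b * c % a = 1) {k k' m m' : ℕ} (hk : k < a) (hk' : k' < a)
    (h : k * b + a * m = k' * b + a * m') : k = k' ∧ m = m' := by
  have hr : k * b % a = k' * b % a := by
    have h1 : (k * b + a * m) % a = k * b % a := Nat.add_mul_mod_self_left _ _ _
    have h2 : (k' * b + a * m') % a = k' * b % a := Nat.add_mul_mod_self_left _ _ _
    rw [← h1, ← h2, h]
  have hkk : k = k' := res_inj ha hc hk hk' hr
  subst hkk
  refine ⟨rfl, ?_⟩
  have h5 : a * m = a * m' := by omega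
  exact Nat.eq_of_mul_eq_mul_left (by omega) h5

lemma mem_glueSet_iff (ha : 1 < a) (hadd : ∀ s ∈ S, s + b ∈ S) {x : ℕ} :
    x ∈ glueSet S a b ↔ ∃ k, k < a ∧ ∃ m ∈ S, x = k * b + a * m := by
  constructor
  · rintro ⟨s, hs, k, rfl⟩
    have hmul : ∀ q, s + q * b ∈ S := by
      intro q
      induction q with
      | zero => simpa using hs
      | succ q ih => have := hadd _ ih; convert this using 1; ring
    refine ⟨k % a, Nat.mod_lt _ (by omega), s + (k / a) * b, hmul _, ?_⟩
    have : k = a * (k / a) + k % a := (Nat.div_add_mod k a).symm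
    calc a * s + k * b = a * s + (a * (k/a) + k % a) * b := by rw [← this]
      _ = k % a * b + a * (s + k / a * b) := by ring
  · rintro ⟨k, hk, m, hm, rfl⟩
    exact ⟨m, hm, k, by ring⟩

lemma mem_glueG_iff (x : ℕ) : x ∈ glueG G a b ↔
    ∃ k, k < a ∧ ((∃ m ∈ G, k*b + a*m = x) ∨ ∃ s, s < k*b/a ∧ k*b % a + a*s = x) := by
  simp [glueG, Finset.mem_biUnion, Finset.mem_union, Finset.mem_image, Finset.mem_range]

lemma coe_glueG (ha : 1 < a) (hc : b * c % a = 1) (hG : ↑G = Sᶜ)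
    (hadd : ∀ s ∈ S, s + b ∈ S) : ↑(glueG G a b) = (glueSet S a b)ᶜ := by
  have hmemG : ∀ m : ℕ, m ∈ G ↔ m ∉ S := by
    intro m
    rw [← Finset.mem_coe, hG]; rfl
  ext x
  rw [Finset.mem_coe, mem_glueG_iff, Set.mem_compl_iff]
  constructor
  · rintro ⟨k, hk, hx⟩ hxS
    rw [mem_glueSet_iff ha hadd] at hxS
    obtain ⟨k', hk', m', hm', rfl⟩ := hxS
    rcases hx with ⟨m, hm, heq⟩ | ⟨s, hs, heq⟩
    · obtain ⟨h1, h2⟩ := glue_uniq ha hc hk hk' heq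
      subst h2
      exact (hmemG m).mp hm hm'
    · have hd : a * (k*b/a) + k*b%a = k*b := Nat.div_add_mod _ _
      obtain ⟨t, ht⟩ : ∃ t, k*b/a = s + (t+1) := ⟨k*b/a - s - 1, by omega⟩
      have e1 : a*(s+(t+1)) + k*b%a = k*b := by rw [← ht]; exact hd
      have e2 : k'*b + a*(m'+t+1) = k*b := by
        calc k'*b + a*(m'+t+1) = (k'*b + a*m') + a*(t+1) := by ring
          _ = (k*b%a + a*s) + a*(t+1) := by rw [heq]
          _ = a*(s+(t+1)) + k*b%a := by ring
          _ = k*b := e1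
      have heq2 : k*b + a*0 = k'*b + a*(m'+t+1) := by rw [e2, mul_zero, add_zero]
      obtain ⟨h1, h2⟩ := glue_uniq ha hc hk hk' heq2
      omega
  · intro hxS
    set k := x * c % a with hkdef
    have hk : k < a := Nat.mod_lt _ (by omega)
    have hcong : x % a = k * b % a := by
      have h1 : k * b ≡ x * c * b [MOD a] := Nat.ModEq.mul_right b (Nat.mod_modEq _ _)
      have h2 : x * c * b ≡ x * 1 [MOD a] := by
        have hbc : b * c ≡ 1 [MOD a] := by
          unfold Nat.ModEq; rw [hc, Nat.mod_eq_of_lt ha]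
        calc x * c * b = x * (b * c) := by ring
          _ ≡ x * 1 [MOD a] := Nat.ModEq.mul_left x hbc
      have h4 : k * b % a = (x * 1) % a := h1.trans h2
      rw [mul_one] at h4
      exact h4.symm
    have hdx : a * (x/a) + x%a = x := Nat.div_add_mod _ _
    have hdk : a * (k*b/a) + k*b%a = k*b := Nat.div_add_mod _ _
    refine ⟨k, hk, ?_⟩
    rcases le_or_gt (k*b) x with hxk | hxk
    · left
      have hdiv : k*b/a ≤ x/a := Nat.div_le_div_right hxk
      obtain ⟨m, hm⟩ : ∃ m, x/a = k*b/a + m := ⟨x/a - k*b/a, by omega⟩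
      have hexp : a*(k*b/a + m) = a*(k*b/a) + a*m := mul_add a _ _
      have hx2 : a*(k*b/a + m) + x % a = x := by rw [← hm]; exact hdx
      refine ⟨m, ?_, by omega⟩
      rw [hmemG]
      intro hmS
      apply hxS
      rw [mem_glueSet_iff ha hadd]
      exact ⟨k, hk, m, hmS, by omega⟩
    · right
      refine ⟨x/a, ?_, by omega⟩
      have h5 : a * (x/a) < a * (k*b/a) := by omega
      exact Nat.lt_of_mul_lt_mul_left h5
end

section Glue2
variable {S : Set ℕ} {G : Finset ℕ} {a b c : ℕ}

lemma negOnePow_even_mod (hA : Even a) (x : ℕ) : ((-1:ℤ))^(x % a) = (-1:ℤ)^x := by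
  conv_rhs => rw [← Nat.div_add_mod x a]
  rw [pow_add, pow_mul, hA.neg_one_pow, one_pow, one_mul]

lemma negOnePow_odd_mod (hA : Odd a) (x : ℕ) : ((-1:ℤ))^x = (-1:ℤ)^(x / a) * (-1:ℤ)^(x % a) := by
  conv_lhs => rw [← Nat.div_add_mod x a]
  rw [pow_add, pow_mul, hA.neg_one_pow]

lemma DD_glueG_sum (ha : 1 < a) (hc : b * c % a = 1) :
    DD (glueG G a b) = ∑ k ∈ range a,
      ((∑ m ∈ G, (-1:ℤ)^(k*b+a*m+1)) + ∑ s ∈ range (k*b/a), (-1:ℤ)^(k*b%a+a*s+1)) := by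
  have ha0 : 0 < a := by omega
  have hres : ∀ k, ∀ x ∈ (G.image fun m => k*b + a*m) ∪
      (range (k*b / a)).image fun s => k*b % a + a*s, x % a = k*b % a := by
    intro k x hx
    rcases Finset.mem_union.mp hx with hx | hx
    · obtain ⟨m, _, rfl⟩ := Finset.mem_image.mp hx
      exact Nat.add_mul_mod_self_left _ _ _
    · obtain ⟨s, _, rfl⟩ := Finset.mem_image.mp hx
      rw [Nat.add_mul_mod_self_left]
      exact Nat.mod_eq_of_lt (Nat.mod_lt _ ha0)
  unfold DD glueG
  rw [Finset.sum_biUnion]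
  · apply Finset.sum_congr rfl
    intro k hk
    have hdisj2 : Disjoint (G.image fun m => k*b + a*m)
        ((range (k*b / a)).image fun s => k*b % a + a*s) := by
      rw [Finset.disjoint_left]
      rintro x hx1 hx2
      obtain ⟨m, _, rfl⟩ := Finset.mem_image.mp hx1
      obtain ⟨s, hs, heq⟩ := Finset.mem_image.mp hx2
      rw [Finset.mem_range] at hs
      have hd : a * (k*b/a) + k*b%a = k*b := Nat.div_add_mod _ _
      obtain ⟨t, ht⟩ : ∃ t, k*b/a = s + (t+1) := ⟨k*b/a - s - 1, by omega⟩
      have : a*(s+(t+1)) = a*s + a*(t+1) := by ring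
      have h1 : a * (t+1) ≥ a := Nat.le_mul_of_pos_right a (by omega)
      have h2 : a*(k*b/a) = a*(s+(t+1)) := by rw [ht]
      omega
    rw [Finset.sum_union hdisj2, Finset.sum_image, Finset.sum_image]
    · intro x _ y _ h
      have : a * x = a * y := by simp only at h; omega
      exact Nat.eq_of_mul_eq_mul_left ha0 this
    · intro x _ y _ h
      have : a * x = a * y := by simp only at h; omega
      exact Nat.eq_of_mul_eq_mul_left ha0 this
  · intro k hk k' hk' hne
    rw [Finset.mem_coe, Finset.mem_range] at hk hk'
    rw [Function.onFun, Finset.disjoint_left]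
    intro x hx1 hx2
    have e1 := hres k x hx1
    have e2 := hres k' x hx2
    exact hne (res_inj ha hc hk hk' (by rw [← e1, ← e2]))

lemma sum_reindex_mod (ha : 1 < a) (hc : b * c % a = 1) (f : ℕ → ℤ) :
    ∑ k ∈ range a, f (k * b % a) = ∑ r ∈ range a, f r := by
  have ha0 : 0 < a := by omega
  refine Finset.sum_nbij' (fun k => k * b % a) (fun r => r * c % a) ?_ ?_ ?_ ?_ ?_
  · intro k hk; exact Finset.mem_range.mpr (Nat.mod_lt _ ha0)
  · intro r hr; exact Finset.mem_range.mpr (Nat.mod_lt _ ha0)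
  · intro k hk; exact hbc_mod ha hc k (Finset.mem_range.mp hk)
  · intro r hr
    exact hbc_mod (b := c) (c := b) ha (by rwa [mul_comm] at hc) r (Finset.mem_range.mp hr)
  · intro k hk; rfl

lemma term1_even (hA : Even a) (k : ℕ) :
    ∑ m ∈ G, (-1:ℤ)^(k*b+a*m+1) = (G.card : ℤ) * (-1:ℤ)^(k*b+1) := by
  rw [Finset.sum_congr rfl (fun m _ => ?_), Finset.sum_const, nsmul_eq_mul]
  show ((-1:ℤ))^(k*b+a*m+1) = (-1:ℤ)^(k*b+1)
  have : k*b+a*m+1 = (k*b+1) + a*m := by ring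
  rw [this, pow_add, (hA.mul_right m).neg_one_pow, mul_one]

lemma term1_odd (hA : Odd a) (k : ℕ) :
    ∑ m ∈ G, (-1:ℤ)^(k*b+a*m+1) = (-1:ℤ)^(k*b) * DD G := by
  rw [DD, Finset.mul_sum]
  apply Finset.sum_congr rfl
  intro m _
  have : k*b+a*m+1 = k*b + (a*m+1) := by ring
  have h2 : (-1:ℤ)^(a*m) = (-1:ℤ)^m := by rw [pow_mul, hA.neg_one_pow]
  rw [this, pow_add, pow_add, h2, ← pow_add]

lemma term2_even (hA : Even a) (k : ℕ) :
    ∑ s ∈ range (k*b/a), (-1:ℤ)^(k*b%a+a*s+1) = ((k*b/a : ℕ) : ℤ) * (-1:ℤ)^(k*b+1) := by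
  rw [Finset.sum_congr rfl (fun s _ => ?_), Finset.sum_const, nsmul_eq_mul, Finset.card_range]
  show ((-1:ℤ))^(k*b%a+a*s+1) = (-1:ℤ)^(k*b+1)
  have : k*b%a+a*s+1 = (k*b%a+1) + a*s := by ring
  rw [this, pow_add, (hA.mul_right s).neg_one_pow, mul_one, pow_add, pow_add,
    negOnePow_even_mod hA]

lemma term2_odd (hA : Odd a) (k : ℕ) :
    ∑ s ∈ range (k*b/a), (-1:ℤ)^(k*b%a+a*s+1)
      = (-1:ℤ)^(k*b%a+1) * (if Even (k*b/a) then 0 else 1) := by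
  have h1 : ∀ s, (-1:ℤ)^(k*b%a+a*s+1) = (-1:ℤ)^(k*b%a+1) * (-1:ℤ)^s := by
    intro s
    have : k*b%a+a*s+1 = (k*b%a+1) + a*s := by ring
    rw [this, pow_add, pow_mul, hA.neg_one_pow]
  rw [Finset.sum_congr rfl (fun s _ => h1 s), ← Finset.mul_sum, sum_neg_one_pow]

end Glue2

section Glue3
variable {S : Set ℕ} {G : Finset ℕ} {a b c : ℕ}

lemma glue_DD_even_a (ha : 1 < a) (hA : Even a) (hB : Odd b) (hc : b * c % a = 1) :
    2 * DD (glueG G a b) = (b : ℤ) - 1 := by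
  obtain ⟨t, ht⟩ := id hA
  have ha2 : a = 2 * t := by omega
  have ht0 : 0 < t := by omega
  have hkb' : ∀ k : ℕ, (-1:ℤ)^(k*b) = (-1:ℤ)^k := by
    intro k; rw [pow_mul', hB.neg_one_pow]
  rw [DD_glueG_sum ha hc]
  have hstep : ∀ k ∈ range a, (∑ m ∈ G, (-1:ℤ)^(k*b+a*m+1))
      + ∑ s ∈ range (k*b/a), (-1:ℤ)^(k*b%a+a*s+1)
      = ((G.card : ℤ) + ((k*b/a : ℕ) : ℤ)) * (-1:ℤ)^(k+1) := by
    intro k _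
    rw [term1_even hA, term2_even hA]
    have hkb : (-1:ℤ)^(k*b+1) = (-1:ℤ)^(k+1) := by
      rw [pow_add, pow_add, hkb']
    rw [hkb]; ring
  rw [Finset.sum_congr rfl hstep]
  have hsplit : ∑ k ∈ range a, ((G.card : ℤ) + ((k*b/a : ℕ) : ℤ)) * (-1:ℤ)^(k+1)
      = (G.card : ℤ) * (∑ k ∈ range a, (-1:ℤ)^(k+1))
        + ∑ k ∈ range a, (-1:ℤ)^(k+1) * ((k*b/a : ℕ) : ℤ) := by
    rw [Finset.mul_sum, ← Finset.sum_add_distrib]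
    apply Finset.sum_congr rfl; intro k _; ring
  have hzero : ∑ k ∈ range a, (-1:ℤ)^(k+1) = 0 := by
    have h' : ∀ k ∈ range a, (-1:ℤ)^(k+1) = (-1) * (-1:ℤ)^k := by
      intro k _; rw [pow_add]; ring
    rw [Finset.sum_congr rfl h', ← Finset.mul_sum, sum_neg_one_pow, if_pos hA, mul_zero]
  set T := ∑ k ∈ range a, (-1:ℤ)^(k+1) * ((k*b/a : ℕ) : ℤ) with hT
  rw [hsplit, hzero, mul_zero, zero_add]
  have key : (a:ℤ) * T = ∑ k ∈ range a, (-1:ℤ)^(k+1) * ((k*b : ℕ) : ℤ)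
      - ∑ k ∈ range a, (-1:ℤ)^(k+1) * ((k*b%a : ℕ) : ℤ) := by
    rw [hT, Finset.mul_sum, ← Finset.sum_sub_distrib]
    apply Finset.sum_congr rfl
    intro k _
    have hdm : (a : ℤ) * ((k*b/a : ℕ) : ℤ) + ((k*b%a : ℕ) : ℤ) = ((k*b : ℕ) : ℤ) := by
      exact_mod_cast congrArg (Nat.cast : ℕ → ℤ) (Nat.div_add_mod (k*b) a)
    linear_combination (-1:ℤ)^(k+1) * hdm
  have h1 : ∑ k ∈ range a, (-1:ℤ)^(k+1) * ((k*b : ℕ) : ℤ) = (b:ℤ) * t := by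
    have h' : ∀ k ∈ range a, (-1:ℤ)^(k+1) * ((k*b : ℕ) : ℤ) = (b:ℤ) * ((-1:ℤ)^(k+1) * k) := by
      intro k _; push_cast; ring
    rw [Finset.sum_congr rfl h', ← Finset.mul_sum, ha2, sum_neg_one_pow_mul]
  have h2 : ∑ k ∈ range a, (-1:ℤ)^(k+1) * ((k*b%a : ℕ) : ℤ) = (t : ℤ) := by
    have hptw : ∀ k ∈ range a, (-1:ℤ)^(k+1) * ((k*b%a : ℕ) : ℤ)
        = (-1:ℤ)^(k*b%a+1) * ((k*b%a : ℕ) : ℤ) := by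
      intro k _
      have h3 : (-1:ℤ)^(k*b%a) = (-1:ℤ)^k := by
        rw [negOnePow_even_mod hA, hkb']
      rw [pow_add, pow_add, h3]
    have hre : ∑ k ∈ range a, (-1:ℤ)^(k*b%a+1) * ((k*b%a : ℕ) : ℤ)
        = ∑ r ∈ range a, (-1:ℤ)^(r+1) * ((r : ℕ) : ℤ) :=
      sum_reindex_mod ha hc (fun r : ℕ => (-1:ℤ)^(r+1) * ((r : ℕ) : ℤ))
    rw [Finset.sum_congr rfl hptw, hre, ha2, sum_neg_one_pow_mul]
  rw [h1, h2] at key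
  have key2 : (t : ℤ) * (2 * T) = (t : ℤ) * ((b:ℤ) - 1) := by
    rw [ha2] at key; push_cast at key ⊢; linarith
  exact mul_left_cancel₀ (by exact_mod_cast ht0.ne') key2

lemma glue_DD_odd_a (hA : Odd a) (ha : 1 < a) (hc : b * c % a = 1) :
    DD (glueG G a b) = (∑ k ∈ range a, (-1:ℤ)^(k*b)) * DD G
      + ∑ k ∈ range a, (-1:ℤ)^(k*b%a+1) * (if Even (k*b/a) then 0 else 1) := by
  rw [DD_glueG_sum ha hc]
  rw [Finset.sum_add_distrib, Finset.sum_mul]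
  congr 1
  · exact Finset.sum_congr rfl (fun k _ => term1_odd hA k)
  · exact Finset.sum_congr rfl (fun k _ => term2_odd hA k)

lemma glue_DD_odd_even (ha : 1 < a) (hA : Odd a) (hB : Even b) (hc : b * c % a = 1) :
    (a : ℤ) * DD G + 1 ≤ DD (glueG G a b) := by
  rw [glue_DD_odd_a hA ha hc]
  have h1 : ∑ k ∈ range a, (-1:ℤ)^(k*b) = (a : ℤ) := by
    rw [Finset.sum_congr rfl (fun k _ => (hB.mul_left k).neg_one_pow), Finset.sum_const,
      Finset.card_range, nsmul_eq_mul, mul_one]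
  have h2 : ∀ k ∈ range a, (-1:ℤ)^(k*b%a+1) * (if Even (k*b/a) then (0:ℤ) else 1)
      = (if Even (k*b%a) then (0:ℤ) else 1) := by
    intro k _
    have hMr : (-1:ℤ)^(k*b/a) * (-1:ℤ)^(k*b%a) = 1 := by
      rw [← negOnePow_odd_mod hA, (hB.mul_left k).neg_one_pow]
    rcases Nat.even_or_odd (k*b%a) with hr | hr <;> rcases Nat.even_or_odd (k*b/a) with hM | hM
    · simp [hr, hM]
    · rw [hM.neg_one_pow, hr.neg_one_pow] at hMr; norm_num at hMr
    · rw [hM.neg_one_pow, hr.neg_one_pow] at hMr; norm_num at hMr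
    · rw [if_neg (Nat.not_even_iff_odd.mpr hM), if_neg (Nat.not_even_iff_odd.mpr hr),
        mul_one, pow_add, hr.neg_one_pow]
      norm_num
  have hre : ∑ k ∈ range a, (if Even (k*b%a) then (0:ℤ) else 1)
      = ∑ r ∈ range a, (if Even r then (0:ℤ) else 1) :=
    sum_reindex_mod ha hc (fun r : ℕ => if Even r then (0:ℤ) else 1)
  rw [h1, Finset.sum_congr rfl h2, hre]
  have hge : (1:ℤ) ≤ ∑ r ∈ range a, (if Even r then (0:ℤ) else 1) := by
    have h1mem : 1 ∈ range a := Finset.mem_range.mpr ha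
    have := Finset.single_le_sum (f := fun r => if Even r then (0:ℤ) else 1)
      (fun i _ => by positivity) h1mem
    simpa using this
  linarith

lemma glue_DD_odd_odd (ha : 1 < a) (hA : Odd a) (hB : Odd b) (hc : b * c % a = 1) :
    DD (glueG G a b) = DD G := by
  rw [glue_DD_odd_a hA ha hc]
  have hkb' : ∀ k : ℕ, (-1:ℤ)^(k*b) = (-1:ℤ)^k := by
    intro k; rw [pow_mul', hB.neg_one_pow]
  have h1 : ∑ k ∈ range a, (-1:ℤ)^(k*b) = 1 := by
    rw [Finset.sum_congr rfl (fun k _ => hkb' k), sum_neg_one_pow,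
      if_neg (Nat.not_even_iff_odd.mpr hA)]
  set S2 := ∑ k ∈ range a, (-1:ℤ)^(k*b%a+1) * (if Even (k*b/a) then (0:ℤ) else 1) with hS2
  have hdouble : 2 * S2 = ∑ k ∈ range a,
      ((-1:ℤ)^(k*b%a+1) - (-1:ℤ)^(k*b%a+1) * (-1:ℤ)^(k*b/a)) := by
    rw [hS2, Finset.mul_sum]
    apply Finset.sum_congr rfl
    intro k _
    rcases Nat.even_or_odd (k*b/a) with hM | hM
    · rw [if_pos hM, hM.neg_one_pow]; ring
    · rw [if_neg (Nat.not_even_iff_odd.mpr hM), hM.neg_one_pow]; ring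
  have hsplit : ∑ k ∈ range a, ((-1:ℤ)^(k*b%a+1) - (-1:ℤ)^(k*b%a+1) * (-1:ℤ)^(k*b/a))
      = (∑ k ∈ range a, (-1:ℤ)^(k*b%a+1)) + ∑ k ∈ range a, (-1:ℤ)^(k*b) := by
    rw [← Finset.sum_add_distrib]
    apply Finset.sum_congr rfl
    intro k _
    have hx : (-1:ℤ)^(k*b) = (-1:ℤ)^(k*b/a) * (-1:ℤ)^(k*b%a) := negOnePow_odd_mod hA _
    rw [hx, pow_add]; ring
  have hfirst : ∑ k ∈ range a, (-1:ℤ)^(k*b%a+1) = -1 := by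
    have hre : ∑ k ∈ range a, (-1:ℤ)^(k*b%a+1) = ∑ r ∈ range a, (-1:ℤ)^(r+1) :=
      sum_reindex_mod ha hc (fun r : ℕ => (-1:ℤ)^(r+1))
    have h' : ∀ r ∈ range a, (-1:ℤ)^(r+1) = (-1) * (-1:ℤ)^r := by
      intro r _; rw [pow_add]; ring
    rw [hre, Finset.sum_congr rfl h', ← Finset.mul_sum, sum_neg_one_pow,
      if_neg (Nat.not_even_iff_odd.mpr hA)]
    ring
  have hzero : S2 = 0 := by
    have h0 : 2 * S2 = 0 := by rw [hdouble, hsplit, hfirst, h1]; ring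
    linarith
  rw [h1, hzero]; ring

end Glue3

section Compound
variable (A B : ℕ → ℕ)

lemma odd_prod {s : Finset ℕ} {f : ℕ → ℕ} :
    Odd (∏ j ∈ s, f j) ↔ ∀ j ∈ s, Odd (f j) := by
  constructor
  · intro h j hj
    rcases Nat.even_or_odd (f j) with he | ho
    · exfalso
      have h2 : 2 ∣ ∏ j ∈ s, f j := dvd_trans he.two_dvd (Finset.dvd_prod_of_mem f hj)
      rw [Nat.odd_iff] at h
      omega
    · exact ho
  · intro h
    exact Finset.prod_induction f Odd (fun x y => Odd.mul) odd_one h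

lemma compound_step (p i : ℕ) (hi : i ≤ p) :
    compoundSeq A B (p+1) i = A (p+1) * compoundSeq A B p i := by
  unfold compoundSeq
  rw [Finset.prod_Icc_succ_top (by omega : i+1 ≤ p+1)]
  ring

lemma compound_last (p : ℕ) :
    compoundSeq A B (p+1) (p+1) = ∏ j ∈ Finset.Icc 1 (p+1), B j := by
  unfold compoundSeq
  rw [show Finset.Icc (p+1+1) (p+1) = ∅ from Finset.Icc_eq_empty (by omega),
    Finset.prod_empty, mul_one]

lemma compound_p (p : ℕ) :
    compoundSeq A B p p = ∏ j ∈ Finset.Icc 1 p, B j := by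
  unfold compoundSeq
  rw [show Finset.Icc (p+1) p = ∅ from Finset.Icc_eq_empty (by omega),
    Finset.prod_empty, mul_one]

lemma compound_zero (p : ℕ) :
    compoundSeq A B p 0 = ∏ j ∈ Finset.Icc 1 p, A j := by
  unfold compoundSeq
  rw [show Finset.Icc 1 0 = ∅ from Finset.Icc_eq_empty (by omega),
    Finset.prod_empty, one_mul]

lemma genBy_step (p : ℕ) :
    genBy (compoundSeq A B (p+1)) (p+1+1)
      = glueSet (genBy (compoundSeq A B p) (p+1)) (A (p+1))
          (∏ j ∈ Finset.Icc 1 (p+1), B j) := by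
  ext x
  constructor
  · rintro ⟨y, rfl⟩
    refine ⟨∑ i ∈ range (p+1), y i * compoundSeq A B p i, ⟨y, rfl⟩, y (p+1), ?_⟩
    rw [Finset.sum_range_succ, compound_last, Finset.mul_sum]
    congr 1
    apply Finset.sum_congr rfl
    intro i hi
    rw [compound_step A B p i (by simp at hi; omega)]
    ring
  · rintro ⟨s, ⟨y, rfl⟩, k, rfl⟩
    refine ⟨fun i => if i = p+1 then k else y i, ?_⟩
    symm
    rw [Finset.sum_range_succ]
    dsimp only
    rw [if_pos rfl, compound_last, Finset.mul_sum]
    symm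
    congr 1
    apply Finset.sum_congr rfl
    intro i hi
    rw [if_neg (by simp at hi; omega), compound_step A B p i (by simp at hi; omega)]
    ring

lemma genBy_add_b (p : ℕ) :
    ∀ s ∈ genBy (compoundSeq A B p) (p+1),
      s + (∏ j ∈ Finset.Icc 1 (p+1), B j) ∈ genBy (compoundSeq A B p) (p+1) := by
  rintro s ⟨y, rfl⟩
  refine ⟨fun i => if i = p then y p + B (p+1) else y i, ?_⟩
  have hb : ∏ j ∈ Finset.Icc 1 (p+1), B j = B (p+1) * ∏ j ∈ Finset.Icc 1 p, B j := by
    rw [Finset.prod_Icc_succ_top (by omega)]; ring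
  have e1 := Finset.sum_range_succ (fun i => y i * compoundSeq A B p i) p
  have e2 := Finset.sum_range_succ
    (fun i => (if i = p then y p + B (p+1) else y i) * compoundSeq A B p i) p
  have e3 : ∑ i ∈ range p, (if i = p then y p + B (p+1) else y i) * compoundSeq A B p i
      = ∑ i ∈ range p, y i * compoundSeq A B p i := by
    apply Finset.sum_congr rfl
    intro i hi
    rw [if_neg (by simp at hi; omega)]
  rw [e1, e2, e3, if_pos rfl, hb, compound_p]
  ring
end Compound

section Main
variable (A B : ℕ → ℕ)

lemma compound_odd_iff (p : ℕ) :
    (∀ i ≤ p, Odd (compoundSeq A B p i)) ↔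
      (∀ i, 1 ≤ i → i ≤ p → Odd (A i) ∧ Odd (B i)) := by
  constructor
  · intro h i h1 hip
    constructor
    · have h0 := h 0 (by omega)
      rw [compound_zero] at h0
      exact odd_prod.mp h0 i (Finset.mem_Icc.mpr ⟨h1, hip⟩)
    · have hp := h p (le_refl _)
      rw [compound_p] at hp
      exact odd_prod.mp hp i (Finset.mem_Icc.mpr ⟨h1, hip⟩)
  · intro h i hip
    unfold compoundSeq
    apply Odd.mul
    · refine odd_prod.mpr (fun j hj => ?_)
      have hj' := Finset.mem_Icc.mp hj
      exact (h j hj'.1 (by omega)).2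
    · refine odd_prod.mpr (fun j hj => ?_)
      have hj' := Finset.mem_Icc.mp hj
      exact (h j (by omega) hj'.2).1

lemma main_ind : ∀ p, IsSuitablePair A B p →
    (∀ i, 1 ≤ i → i ≤ p → 1 < A i ∧ 1 < B i) →
    ∃ G : Finset ℕ, ↑G = (genBy (compoundSeq A B p) (p+1))ᶜ ∧ 0 ≤ DD G ∧
      (DD G = 0 ↔ ∀ i, 1 ≤ i → i ≤ p → Odd (A i) ∧ Odd (B i)) := by
  intro p
  induction p with
  | zero =>
    intro _ _
    refine ⟨∅, ?_, by simp [DD], ?_⟩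
    · have h0 : compoundSeq A B 0 0 = 1 := by
        unfold compoundSeq
        rw [show Finset.Icc 1 0 = ∅ from Finset.Icc_eq_empty (by omega)]
        simp
      have huniv : genBy (compoundSeq A B 0) (0+1) = Set.univ := by
        apply Set.eq_univ_of_forall
        intro x
        exact ⟨fun _ => x, by simp [h0]⟩
      rw [huniv, Set.compl_univ, Finset.coe_empty]
    · constructor
      · intro _ i h1 h0
        exact absurd h0 (by omega)
      · intro _; simp [DD]
  | succ p ih =>
    intro hsuit h2
    have hsuit' : IsSuitablePair A B p :=
      ⟨fun i hi hip => hsuit.1 i hi (by omega),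
       fun i j hj hji hip => hsuit.2 i j hj hji (by omega)⟩
    obtain ⟨G, hG, hDD, hiff⟩ := ih hsuit' (fun i hi hip => h2 i hi (by omega))
    have ha : 1 < A (p+1) := (h2 (p+1) (by omega) (by omega)).1
    have hb : 1 < ∏ j ∈ Finset.Icc 1 (p+1), B j := by
      have h1 : (1:ℕ) ≤ ∏ j ∈ Finset.Icc 1 p, B j := by
        refine Finset.one_le_prod' (fun j hj => ?_)
        have hj' := Finset.mem_Icc.mp hj
        have := (hsuit.1 j hj'.1 (by omega)).2
        omega
      have h2' : 1 < B (p+1) := (h2 (p+1) (by omega) (by omega)).2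
      rw [Finset.prod_Icc_succ_top (by omega)]
      calc 1 < 1 * B (p+1) := by omega
        _ ≤ (∏ j ∈ Finset.Icc 1 p, B j) * B (p+1) := Nat.mul_le_mul_right _ h1
    have hab : Nat.Coprime (A (p+1)) (∏ j ∈ Finset.Icc 1 (p+1), B j) := by
      refine Nat.Coprime.prod_right (fun j hj => ?_)
      have hj' := Finset.mem_Icc.mp hj
      exact hsuit.2 (p+1) j hj'.1 hj'.2 (le_refl _)
    obtain ⟨c, -, hc⟩ := Nat.exists_mul_mod_eq_one_of_coprime hab.symm ha
    have hadd := genBy_add_b A B p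
    have hGlue := coe_glueG ha hc hG hadd
    refine ⟨glueG G (A (p+1)) (∏ j ∈ Finset.Icc 1 (p+1), B j), ?_, ?_⟩
    · rw [genBy_step A B p]
      exact hGlue
    rcases Nat.even_or_odd (A (p+1)) with hA | hA
    · -- a even, so b odd
      have hB : Odd (∏ j ∈ Finset.Icc 1 (p+1), B j) := by
        rcases Nat.even_or_odd (∏ j ∈ Finset.Icc 1 (p+1), B j) with he | ho
        · exfalso
          have h21 : (2:ℕ) ∣ 1 := hab ▸ Nat.dvd_gcd hA.two_dvd he.two_dvd
          omega
        · exact ho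
      have h2DD := glue_DD_even_a (G := G) ha hA hB hc
      have hbz : (2:ℤ) ≤ (∏ j ∈ Finset.Icc 1 (p+1), B j : ℕ) := by exact_mod_cast hb
      constructor
      · omega
      constructor
      · intro h0; rw [h0] at h2DD; omega
      · intro hall
        exfalso
        have hodd := (hall (p+1) (by omega) (le_refl _)).1
        rw [Nat.odd_iff] at hodd
        rw [Nat.even_iff] at hA
        omega
    · rcases Nat.even_or_odd (∏ j ∈ Finset.Icc 1 (p+1), B j) with hB | hB
      · -- a odd, b even
        have hge := glue_DD_odd_even (G := G) ha hA hB hc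
        have hmul : (0:ℤ) ≤ (A (p+1) : ℤ) * DD G := by positivity
        constructor
        · linarith
        constructor
        · intro h0; linarith
        · intro hall
          exfalso
          have hodd : Odd (∏ j ∈ Finset.Icc 1 (p+1), B j) := by
            refine odd_prod.mpr (fun j hj => ?_)
            have hj' := Finset.mem_Icc.mp hj
            exact (hall j hj'.1 hj'.2).2
          rw [Nat.odd_iff] at hodd
          rw [Nat.even_iff] at hB
          omega
      · -- both odd
        have heq := glue_DD_odd_odd (G := G) ha hA hB hc
        rw [heq, hiff]
        refine ⟨hDD, ?_⟩
        constructor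
        · intro hall i hi hip
          rcases Nat.lt_or_ge i (p+1) with h | h
          · exact hall i hi (by omega)
          · have hieq : i = p+1 := by omega
            subst hieq
            exact ⟨hA, odd_prod.mp hB (p+1) (Finset.mem_Icc.mpr ⟨by omega, le_refl _⟩)⟩
        · intro hall i hi hip
          exact hall i hi (by omega)

end Main

/-- For `(A, B)` a suitable pair of sequences of integers all greater than `1` and
`S = ⟨C(A,B)⟩`: `O(G(S)) ≥ E(G(S))`, and the following are equivalent:
(1) `O(G(S)) = E(G(S))`; (2) every term of `C(A,B)` is odd; (3) every term of `A` and
of `B` is odd. -/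
theorem parity_compound_tfae (A B : ℕ → ℕ) (p : ℕ) (hsuit : IsSuitablePair A B p)
    (h2 : ∀ i, 1 ≤ i → i ≤ p → 1 < A i ∧ 1 < B i) :
    countEven (genBy (compoundSeq A B p) (p + 1))ᶜ
        ≤ countOdd (genBy (compoundSeq A B p) (p + 1))ᶜ ∧
      (countOdd (genBy (compoundSeq A B p) (p + 1))ᶜ
          = countEven (genBy (compoundSeq A B p) (p + 1))ᶜ ↔
        ∀ i ≤ p, Odd (compoundSeq A B p i)) ∧
      (countOdd (genBy (compoundSeq A B p) (p + 1))ᶜ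
          = countEven (genBy (compoundSeq A B p) (p + 1))ᶜ ↔
        ∀ i, 1 ≤ i → i ≤ p → Odd (A i) ∧ Odd (B i)) := by

  obtain ⟨G, hG, hDD, hiff⟩ := main_ind A B p hsuit h2
  have hOdd : countOdd (genBy (compoundSeq A B p) (p + 1))ᶜ
      = (G.filter (fun x => Odd x)).card := by
    unfold countOdd
    rw [← hG, show {x ∈ (↑G : Set ℕ) | Odd x} = ↑(G.filter (fun x => Odd x)) by
      ext x; simp, Set.ncard_coe_finset]
  have hEven : countEven (genBy (compoundSeq A B p) (p + 1))ᶜ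
      = (G.filter (fun x => Even x)).card := by
    unfold countEven
    rw [← hG, show {x ∈ (↑G : Set ℕ) | Even x} = ↑(G.filter (fun x => Even x)) by
      ext x; simp, Set.ncard_coe_finset]
  have hDDeq := DD_eq G
  have h13 : (countOdd (genBy (compoundSeq A B p) (p + 1))ᶜ
      = countEven (genBy (compoundSeq A B p) (p + 1))ᶜ)
      ↔ (∀ i, 1 ≤ i → i ≤ p → Odd (A i) ∧ Odd (B i)) := by
    rw [hOdd, hEven]
    rw [hDDeq] at hiff
    constructor
    · intro h
      exact hiff.mp (by omega)
    · intro h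
      have := hiff.mpr h
      omega
  refine ⟨?_, ?_, h13⟩
  · rw [hOdd, hEven]
    rw [hDDeq] at hDD
    omega
  · exact h13.trans (compound_odd_iff A B p).symm
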